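/- Let A be a ring, d ∈ A, and e a natural number with (0 :_A d^e) = (0 :_A d^{e+1}). If V is a flat A-algebra, then (0 :_V d) ∩ d^e V = 0. -/

import Mathlib

/-- If `(0 :_A d^e) = (0 :_A d^{e+1})` and `V` is a flat `A`-algebra, then
`(0 :_V d) ∩ d^e V = 0`. -/
theorem stmt_1 (A V : Type*) [CommRing A] [CommRing V] [Algebra A V] [Module.Flat A V]
    (d : A) (e : ℕ)
    (h : {a : A | a * d ^ e = 0} = {a : A | a * d ^ (e + 1) = 0}) :
    ∀ x : V, algebraMap A V d * x = 0 →
      x ∈ Ideal.span {algebraMap A V (d ^ e)} → x = 0 := by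
  intro x hx hspan
  rw [Ideal.mem_span_singleton] at hspan
  obtain ⟨y, rfl⟩ := hspan
  -- reduce to showing `d^e • y = 0`
  have hy : (d ^ (e + 1)) • y = 0 := by
    have h0 : algebraMap A V (d ^ (e + 1)) * y = 0 := by
      rw [pow_succ, map_mul, mul_comm (algebraMap A V (d ^ e)), mul_assoc, hx]
    rw [Algebra.smul_def]
    exact h0
  set K : Submodule A A := LinearMap.ker (LinearMap.lsmul A A (d ^ e)) with hK
  have hexact : Function.Exact K.subtype (LinearMap.lsmul A A (d ^ (e + 1))) := by
    intro a
    constructor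
    · intro ha
      have ha' : a * d ^ (e + 1) = 0 := by
        simpa [mul_comm] using ha
      have ha2 : a ∈ {a : A | a * d ^ e = 0} := by rw [h]; exact ha'
      exact ⟨⟨a, by simpa [hK, mul_comm] using ha2⟩, rfl⟩
    · rintro ⟨⟨k, hk⟩, rfl⟩
      have hk' : d ^ e * k = 0 := hk
      have : k ∈ {a : A | a * d ^ (e + 1) = 0} := by
        rw [← h]; simpa [mul_comm] using hk'
      simpa [mul_comm] using this
  have hexactV := Module.Flat.lTensor_exact V hexact
  have h1 : (LinearMap.lsmul A A (d ^ (e + 1))).lTensor V (y ⊗ₜ (1 : A)) = 0 := by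
    rw [LinearMap.lTensor_tmul]
    apply (TensorProduct.rid A V).injective
    simp [TensorProduct.rid_tmul, hy]
  obtain ⟨t, ht⟩ := (hexactV (y ⊗ₜ (1 : A))).mp h1
  have hsmul : ∀ s : TensorProduct A V K, (d ^ e) • s = (0 : TensorProduct A V K) := by
    intro s
    induction s using TensorProduct.induction_on with
    | zero => simp
    | tmul v k =>
      have hk0 : (d ^ e) • k = (0 : K) := by
        ext
        exact k.2
      rw [← TensorProduct.tmul_smul, hk0, TensorProduct.tmul_zero]
    | add s t hs ht => rw [smul_add, hs, ht, add_zero]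
  have : (d ^ e) • y = 0 := by
    have := congrArg (fun z => (TensorProduct.rid A V) ((d ^ e) • z)) ht
    rw [← map_smul, hsmul t, map_zero] at this
    simpa [TensorProduct.rid_tmul] using this.symm
  rw [← Algebra.smul_def]
  exact this
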